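/- Let (Ω, Γ, λ) be a regular local prediction game: Γ is a compact topological space, for each ω ∈ Ω the map γ ↦ λ(ω, γ) ∈ [0,∞] is continuous, there exists γ ∈ Γ with λ(ω, γ) < ∞ for all ω ∈ Ω, and for every γ ∈ Γ there exists ω ∈ Ω with λ(ω, γ) ≠ 0. Let f : [0,∞] → [0,1] be continuous and strictly decreasing with f(0) = 1, f(∞) = 0 and f(x) > 0 for all x < ∞. If c ∈ ℝ is such that for every γ' ∈ Γ there exists γ ∈ Γ with f(λ(ω, γ)) ≥ f(λ(ω, γ'))^c for all ω ∈ Ω, then c ≥ 1. In particular, the mixability constant c(f) = inf{ c ∈ ℝ : for every pseudo-prediction ψ induced by a probability distribution on Γ there exists γ ∈ Γ with f(λ(ω, γ)) ≥ f(ψ(ω))^c for all ω } satisfies c(f) ≥ 1. -/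

import Mathlib

open MeasureTheory
open scoped ENNReal

/-- **The mixability constant is at least 1 (Lemma `lemma-c-geq-1`).**
For a regular local prediction game `(Ω, Γ, λ)` with `λ : Ω × Γ → [0,∞]` and a
weighting profile `f : [0,∞] → [0,1]` (continuous, strictly decreasing, `f 0 = 1`,
`f ∞ = 0`, `f x > 0` for `x < ∞`): any `c ∈ ℝ` such that for every `γ'` there is `γ`
with `f (λ(ω, γ)) ≥ f (λ(ω, γ'))^c` for all `ω` satisfies `c ≥ 1`; in particular,
every member of the set defining the mixability constant `c(f)` (with pseudo-predictions
induced by probability distributions on `Γ`) is at least `1`, i.e. `c(f) ≥ 1`. -/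
theorem stmt_9
    {Ω Γ : Type*} [TopologicalSpace Γ] [CompactSpace Γ]
    [MeasurableSpace Γ] [BorelSpace Γ]
    (lam : Ω → Γ → ℝ≥0∞)
    -- regularity: continuity of the loss in the prediction
    (hlam_cont : ∀ w : Ω, Continuous fun γ => lam w γ)
    -- regularity: some prediction has everywhere finite loss
    (hlam_fin : ∃ γ : Γ, ∀ w : Ω, lam w γ ≠ ⊤)
    -- regularity: no prediction has identically zero loss
    (hlam_nz : ∀ γ : Γ, ∃ w : Ω, lam w γ ≠ 0)
    -- weighting profile on [0,∞]
    (f : ℝ≥0∞ → ℝ)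
    (hf_cont : Continuous f)
    (hf_anti : StrictAnti f)
    (hf0 : f 0 = 1)
    (hf_top : f ⊤ = 0)
    (hf_pos : ∀ x : ℝ≥0∞, x ≠ ⊤ → 0 < f x) :
    -- Dirac pseudo-predictions force c ≥ 1 …
    (∀ c : ℝ,
      (∀ γ' : Γ, ∃ γ : Γ, ∀ w : Ω, f (lam w γ') ^ c ≤ f (lam w γ)) → 1 ≤ c) ∧
    -- … and in particular every c in the set defining c(f) is ≥ 1, i.e. c(f) ≥ 1
    (∀ c : ℝ,
      (∀ Q : Measure Γ, IsProbabilityMeasure Q →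
        ∃ γ : Γ, ∀ w : Ω, (∫ γ', f (lam w γ') ∂Q) ^ c ≤ f (lam w γ)) → 1 ≤ c) := by

  have key : ∀ c : ℝ,
      (∀ γ' : Γ, ∃ γ : Γ, ∀ w : Ω, f (lam w γ') ^ c ≤ f (lam w γ)) → 1 ≤ c := by
    intro c hc
    by_contra hlt
    push_neg at hlt
    obtain ⟨γ₀, hγ₀⟩ := hlam_fin
    -- from `1 ≤ f (lam w γ)` for all `w`, derive a contradiction
    have contra : ∀ γ : Γ, (∀ w : Ω, (1 : ℝ) ≤ f (lam w γ)) → False := by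
      intro γ h
      obtain ⟨w, hw⟩ := hlam_nz γ
      apply hw
      have h0 : f 0 ≤ f (lam w γ) := by rw [hf0]; exact h w
      have := (hf_anti.le_iff_ge).mp h0
      exact le_antisymm this zero_le
    rcases le_or_gt c 0 with hc0 | hc0
    · obtain ⟨γ₁, hγ₁⟩ := hc γ₀
      refine contra γ₁ fun w => ?_
      have hx : 0 < f (lam w γ₀) := hf_pos _ (hγ₀ w)
      have hx1 : f (lam w γ₀) ≤ 1 := by
        rw [← hf0]; exact hf_anti.antitone zero_le
      calc (1 : ℝ) = f (lam w γ₀) ^ (0 : ℝ) := (Real.rpow_zero _).symm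
        _ ≤ f (lam w γ₀) ^ c := Real.rpow_le_rpow_of_exponent_ge hx hx1 hc0
        _ ≤ f (lam w γ₁) := hγ₁ w
    · -- 0 < c < 1 : iterate the hypothesis
      choose next hnext using hc
      set γs : ℕ → Γ := fun n => next^[n] γ₀ with hγs
      have hiter : ∀ n : ℕ, ∀ w : Ω, f (lam w γ₀) ^ ((c : ℝ) ^ n) ≤ f (lam w (γs n)) := by
        intro n
        induction n with
        | zero =>
          intro w
          simp [γs, Real.rpow_one]
        | succ n ih =>
          intro w
          have hstep : f (lam w (γs n)) ^ c ≤ f (lam w (γs (n + 1))) := by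
            have : γs (n + 1) = next (γs n) := Function.iterate_succ_apply' next n γ₀
            rw [this]
            exact hnext (γs n) w
          have hx : (0:ℝ) ≤ f (lam w γ₀) := (hf_pos _ (hγ₀ w)).le
          calc f (lam w γ₀) ^ ((c : ℝ) ^ (n + 1))
              = (f (lam w γ₀) ^ ((c : ℝ) ^ n)) ^ c := by
                rw [← Real.rpow_mul hx, pow_succ]
            _ ≤ f (lam w (γs n)) ^ c :=
                Real.rpow_le_rpow (Real.rpow_nonneg hx _) (ih w) hc0.le
            _ ≤ f (lam w (γs (n + 1))) := hstep
      -- take a cluster point of the sequence via an ultrafilter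
      let U : Ultrafilter ℕ := Ultrafilter.of Filter.atTop
      have hU : (U : Filter ℕ) ≤ Filter.atTop := Ultrafilter.of_le _
      obtain ⟨γstar, -, hγstar⟩ := isCompact_univ.ultrafilter_le_nhds (U.map γs)
        (by simp [Filter.le_principal_iff])
      have hlim : Filter.Tendsto γs U (nhds γstar) := hγstar
      refine contra γstar fun w => ?_
      have hx : 0 < f (lam w γ₀) := hf_pos _ (hγ₀ w)
      -- the lower bound tends to 1
      have hcn : Filter.Tendsto (fun n : ℕ => (c : ℝ) ^ n) Filter.atTop (nhds 0) :=
        tendsto_pow_atTop_nhds_zero_of_lt_one hc0.le hlt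
      have hrexp : ContinuousAt (fun y : ℝ => f (lam w γ₀) ^ y) 0 := by
        have := Real.continuousAt_rpow (f (lam w γ₀), (0:ℝ)) (Or.inl hx.ne')
        exact this.comp (Continuous.continuousAt (by continuity))
      have hlb : Filter.Tendsto (fun n : ℕ => f (lam w γ₀) ^ ((c : ℝ) ^ n)) Filter.atTop (nhds 1) := by
        have := hrexp.tendsto.comp hcn
        simpa [Real.rpow_zero, Function.comp_def] using this
      have hlbU : Filter.Tendsto (fun n : ℕ => f (lam w γ₀) ^ ((c : ℝ) ^ n)) U (nhds 1) :=
        hlb.mono_left hU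
      have hub : Filter.Tendsto (fun n : ℕ => f (lam w (γs n))) U (nhds (f (lam w γstar))) :=
        ((hf_cont.comp (hlam_cont w)).continuousAt.tendsto).comp hlim
      exact le_of_tendsto_of_tendsto' hlbU hub fun n => hiter n w
  refine ⟨key, fun c hc => key c fun γ' => ?_⟩
  obtain ⟨γ, hγ⟩ := hc (Measure.dirac γ') (by infer_instance)
  refine ⟨γ, fun w => ?_⟩
  have hm : StronglyMeasurable fun γ'' : Γ => f (lam w γ'') :=
    (hf_cont.comp (hlam_cont w)).stronglyMeasurable
  have := hγ w
  rwa [integral_dirac' _ _ hm] at this
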